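/- For every m, n ≥ 1 and E dividing lcm(m,n), the number s_E(m,n) of subgroups of exponent E of Z_m × Z_n equals ∑ gcd(i,j), the sum over pairs of divisors i of m and j of n with lcm(i,j) = E. -/

import Mathlib

namespace Stmt11

lemma subgroup_char {n : ℕ} [NeZero n] (B : AddSubgroup (ZMod n)) :
    ∃ c, c ∣ n ∧ 0 < c ∧ ∀ y : ZMod n, y ∈ B ↔ c ∣ y.val := by
  obtain ⟨g, hg⟩ := IsAddCyclic.exists_generator (α := B)
  set a := (g : ZMod n).val with ha
  have hga : ((a : ℕ) : ZMod n) = (g : ZMod n) := by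
    rw [ha, ZMod.natCast_val, ZMod.cast_id]
  refine ⟨Nat.gcd a n, Nat.gcd_dvd_right a n,
    Nat.gcd_pos_of_pos_right _ (Nat.pos_of_ne_zero (NeZero.ne n)), fun y => ?_⟩
  constructor
  · intro hy
    obtain ⟨k, hk⟩ := AddSubgroup.mem_zmultiples_iff.mp (hg ⟨y, hy⟩)
    have hky : ((k * a : ℤ) : ZMod n) = y := by
      push_cast
      rw [hga]
      have := congrArg (fun b : B => (b : ZMod n)) hk
      simpa [zsmul_eq_mul] using this
    have hval : (y.val : ℤ) = (k * a) % n := by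
      rw [← hky, ZMod.val_intCast]
    have hdvd : ((Nat.gcd a n : ℕ) : ℤ) ∣ (y.val : ℤ) := by
      rw [hval, Int.emod_def]
      refine dvd_sub (Dvd.dvd.mul_left ?_ k) (Dvd.dvd.mul_right ?_ _)
      · exact_mod_cast Int.natCast_dvd_natCast.mpr (Nat.gcd_dvd_left a n)
      · exact_mod_cast Int.natCast_dvd_natCast.mpr (Nat.gcd_dvd_right a n)
    exact_mod_cast hdvd
  · rintro ⟨t, ht⟩
    have hd : ((Nat.gcd a n : ℕ) : ZMod n) ∈ B := by
      have h1 : ((Nat.gcd a n : ℕ) : ZMod n) = (Nat.gcdA a n) • (g : ZMod n) := by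
        have h2 : ((Nat.gcd a n : ℤ) : ZMod n) = ((a * Nat.gcdA a n + n * Nat.gcdB a n : ℤ) : ZMod n) := by
          rw [← Nat.gcd_eq_gcd_ab]
        push_cast at h2 ⊢
        rw [h2, hga, zsmul_eq_mul]
        simp [mul_comm]
      rw [h1]
      exact B.zsmul_mem g.2 _
    have hy : y = t • ((Nat.gcd a n : ℕ) : ZMod n) := by
      have : y = ((y.val : ℕ) : ZMod n) := by rw [ZMod.natCast_val, ZMod.cast_id]
      rw [this, ht]
      push_cast
      rw [nsmul_eq_mul, mul_comm]
    rw [hy]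
    exact B.nsmul_mem hd t

noncomputable def eps (m i : ℕ) (h : i ∣ m) : ZMod i →+ ZMod m :=
  ZMod.lift i ⟨zmultiplesHom (ZMod m) ((m / i : ℕ) : ZMod m), by
    have : ((i : ℤ) • ((m / i : ℕ) : ZMod m)) = (((i * (m / i) : ℕ)) : ZMod m) := by
      rw [zsmul_eq_mul]; push_cast; ring
    simp only [zmultiplesHom_apply, this, Nat.mul_div_cancel' h, ZMod.natCast_self]⟩

lemma eps_apply {m i : ℕ} [NeZero i] (h : i ∣ m) (s : ZMod i) :
    eps m i h s = ((s.val * (m / i) : ℕ) : ZMod m) := by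
  have hs : s = ((s.val : ℤ) : ZMod i) := by
    rw [Int.cast_natCast, ZMod.natCast_val, ZMod.cast_id]
  conv_lhs => rw [hs]
  rw [eps, ZMod.lift_coe]
  push_cast
  rw [zmultiplesHom_apply, zsmul_eq_mul]
  push_cast
  ring


lemma neZero_of_dvd {m i : ℕ} [NeZero m] (h : i ∣ m) : NeZero i :=
  ⟨fun hi => (NeZero.ne m) (by simpa [hi, zero_dvd_iff] using h)⟩

lemma eps_injective {m i : ℕ} [NeZero m] (h : i ∣ m) : Function.Injective (eps m i h) := by
  haveI : NeZero i := neZero_of_dvd h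
  rw [injective_iff_map_eq_zero]
  intro s hs
  rw [eps_apply h s, ZMod.natCast_eq_zero_iff] at hs
  have hpos : 0 < m / i := Nat.div_pos (Nat.le_of_dvd (Nat.pos_of_ne_zero (NeZero.ne m)) h)
    (Nat.pos_of_ne_zero (NeZero.ne i))
  obtain ⟨k, hk⟩ := hs
  have hk2 : s.val * (m / i) = (i * k) * (m / i) := by
    rw [hk]
    conv_lhs => rw [show m = i * (m / i) from (Nat.mul_div_cancel' h).symm]
    ring
  have hsv : s.val = i * k := Nat.eq_of_mul_eq_mul_right hpos hk2
  have hlt : s.val < i := ZMod.val_lt s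
  have hik : i * k < i := by omega
  have hk0 : k = 0 := by
    rcases k with _ | k
    · rfl
    · exfalso
      have h2 : i ≤ i * (k + 1) := Nat.le_mul_of_pos_right i (Nat.succ_pos k)
      omega
  subst hk0
  rw [Nat.mul_zero] at hsv
  exact (ZMod.val_eq_zero s).mp hsv

lemma mem_range_eps {m i : ℕ} [NeZero m] (h : i ∣ m) (x : ZMod m) :
    x ∈ (eps m i h).range ↔ (m / i) ∣ x.val := by
  haveI : NeZero i := neZero_of_dvd h
  constructor
  · rintro ⟨s, rfl⟩
    rw [eps_apply h s, ZMod.val_natCast]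
    exact (Nat.dvd_mod_iff (Nat.div_dvd_of_dvd h)).mpr (Dvd.intro_left _ rfl)
  · rintro ⟨t, ht⟩
    refine ⟨(t : ZMod i), ?_⟩
    rw [eps_apply, ZMod.val_natCast]
    have key : (t % i) * (m / i) + m * (t / i) = (m / i) * t := by
      conv_rhs => rw [show t = i * (t / i) + t % i from (Nat.div_add_mod t i).symm]
      rw [Nat.mul_add, ← Nat.mul_assoc, Nat.div_mul_cancel h]
      ring
    have : (((t % i) * (m / i) : ℕ) : ZMod m) = (((m / i) * t : ℕ) : ZMod m) := by
      rw [← key]; push_cast [ZMod.natCast_self]; ring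
    rw [this, ← ht, ZMod.natCast_val, ZMod.cast_id]

lemma card_range_eps {m i : ℕ} [NeZero m] (h : i ∣ m) : Nat.card (eps m i h).range = i := by
  haveI : NeZero i := neZero_of_dvd h
  rw [← Nat.card_congr (AddMonoidHom.ofInjective (eps_injective h)).toEquiv, Nat.card_zmod]

lemma subgroup_eq_range {m : ℕ} [NeZero m] (P : AddSubgroup (ZMod m)) {i : ℕ} (h : i ∣ m)
    (hc : Nat.card P = i) : P = (eps m i h).range := by
  obtain ⟨c, hcm, hcpos, hchar⟩ := subgroup_char P
  have hdvd : m / c ∣ m := Nat.div_dvd_of_dvd hcm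
  have hPeq : P = (eps m (m / c) hdvd).range := by
    ext x
    rw [mem_range_eps, Nat.div_div_self hcm (NeZero.ne m), hchar]
  have hcard : Nat.card P = m / c := by
    rw [hPeq, card_range_eps]
  have hieq : i = m / c := by rw [← hc, hcard]
  subst hieq
  exact hPeq


lemma castHom_surjective {j c : ℕ} [NeZero c] (h : c ∣ j) :
    Function.Surjective (ZMod.castHom h (ZMod c)) := by
  intro z
  obtain ⟨a, rfl⟩ := ZMod.natCast_zmod_surjective z
  exact ⟨(a : ZMod j), by rw [map_natCast]⟩

lemma castHom_val {j c : ℕ} [NeZero j] (h : c ∣ j) (y : ZMod j) :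
    ZMod.castHom h (ZMod c) y = ((y.val : ℕ) : ZMod c) := by
  rw [ZMod.castHom_apply, ← ZMod.natCast_val]

def Kcu (i j c : ℕ) (hci : c ∣ i) (hcj : c ∣ j) (u : ZMod c) : AddSubgroup (ZMod i × ZMod j) where
  carrier := {p | u * ZMod.castHom hci (ZMod c) p.1 = ZMod.castHom hcj (ZMod c) p.2}
  zero_mem' := by simp
  add_mem' := by
    intro p q hp hq
    simp only [Set.mem_setOf_eq, Prod.fst_add, Prod.snd_add, map_add, mul_add] at *
    rw [hp, hq]
  neg_mem' := by
    intro p hp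
    simp only [Set.mem_setOf_eq, Prod.fst_neg, Prod.snd_neg, map_neg, mul_neg] at *
    rw [hp]

lemma mem_Kcu {i j c : ℕ} {hci : c ∣ i} {hcj : c ∣ j} {u : ZMod c} {p : ZMod i × ZMod j} :
    p ∈ Kcu i j c hci hcj u ↔ u * ZMod.castHom hci (ZMod c) p.1 = ZMod.castHom hcj (ZMod c) p.2 :=
  Iff.rfl

lemma Kcu_map_fst {i j c : ℕ} [NeZero c] (hci : c ∣ i) (hcj : c ∣ j) (u : ZMod c) :
    (Kcu i j c hci hcj u).map (AddMonoidHom.fst (ZMod i) (ZMod j)) = ⊤ := by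
  rw [AddSubgroup.eq_top_iff']
  intro x
  obtain ⟨y, hy⟩ := castHom_surjective hcj (u * ZMod.castHom hci (ZMod c) x)
  exact AddSubgroup.mem_map.mpr ⟨(x, y), mem_Kcu.mpr hy.symm, rfl⟩

lemma Kcu_map_snd {i j c : ℕ} [NeZero c] (hci : c ∣ i) (hcj : c ∣ j) (u : (ZMod c)ˣ) :
    (Kcu i j c hci hcj (u : ZMod c)).map (AddMonoidHom.snd (ZMod i) (ZMod j)) = ⊤ := by
  rw [AddSubgroup.eq_top_iff']
  intro y
  obtain ⟨x, hx⟩ := castHom_surjective hci ((↑u⁻¹ : ZMod c) * ZMod.castHom hcj (ZMod c) y)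
  refine AddSubgroup.mem_map.mpr ⟨(x, y), mem_Kcu.mpr ?_, rfl⟩
  rw [hx, ← mul_assoc, Units.mul_inv, one_mul]

lemma full_proj_eq_Kcu {i j : ℕ} [NeZero i] [NeZero j] (K : AddSubgroup (ZMod i × ZMod j))
    (h1 : K.map (AddMonoidHom.fst (ZMod i) (ZMod j)) = ⊤)
    (h2 : K.map (AddMonoidHom.snd (ZMod i) (ZMod j)) = ⊤) :
    ∃ (c : ℕ) (hci : c ∣ i) (hcj : c ∣ j) (u : (ZMod c)ˣ), 0 < c ∧
      K = Kcu i j c hci hcj (u : ZMod c) := by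
  have hfst : ∀ x : ZMod i, ∃ y, (x, y) ∈ K := by
    intro x
    have : x ∈ K.map (AddMonoidHom.fst (ZMod i) (ZMod j)) := by rw [h1]; trivial
    obtain ⟨p, hp, hpx⟩ := AddSubgroup.mem_map.mp this
    exact ⟨p.2, by rwa [show (x, p.2) = p from Prod.ext hpx.symm rfl]⟩
  have hsnd : ∀ y : ZMod j, ∃ x, (x, y) ∈ K := by
    intro y
    have : y ∈ K.map (AddMonoidHom.snd (ZMod i) (ZMod j)) := by rw [h2]; trivial
    obtain ⟨p, hp, hpy⟩ := AddSubgroup.mem_map.mp this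
    exact ⟨p.1, by rwa [show (p.1, y) = p from Prod.ext rfl hpy.symm]⟩
  obtain ⟨c, hcj, hcpos, hchar⟩ := subgroup_char
    (K.comap (AddMonoidHom.inr (ZMod i) (ZMod j)))
  haveI : NeZero c := ⟨hcpos.ne'⟩
  have hmemB : ∀ y : ZMod j, ((0 : ZMod i), y) ∈ K ↔ c ∣ y.val := fun y => by
    rw [← hchar]; rfl
  set castc := ZMod.castHom hcj (ZMod c) with hcastc
  have hzero : ∀ y : ZMod j, ((0 : ZMod i), y) ∈ K ↔ castc y = 0 := by
    intro y
    rw [hmemB, castHom_val, ZMod.natCast_eq_zero_iff]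
  have keyA : ∀ p ∈ K, ∀ q ∈ K, p.1 = q.1 → castc p.2 = castc q.2 := by
    intro p hp q hq hpq
    have hsub : p - q ∈ K := sub_mem hp hq
    have : ((0 : ZMod i), p.2 - q.2) ∈ K := by
      rwa [show ((0 : ZMod i), p.2 - q.2) = p - q from Prod.ext (by simp [hpq]) rfl]
    have := (hzero _).mp this
    rw [map_sub, sub_eq_zero] at this
    exact this
  obtain ⟨y₁, hy₁⟩ := hfst 1
  set u0 := castc y₁ with hu0
  have keyB : ∀ p ∈ K, castc p.2 = (p.1.val : ZMod c) * u0 := by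
    intro p hp
    have hq : p.1.val • ((1 : ZMod i), y₁) ∈ K := AddSubgroup.nsmul_mem K hy₁ p.1.val
    have hq1 : p.1 = (p.1.val • ((1 : ZMod i), y₁)).1 := by
      rw [Prod.smul_fst, nsmul_eq_mul, mul_one, ZMod.natCast_val, ZMod.cast_id]
    have h := keyA p hp _ hq hq1
    rw [h, Prod.smul_snd, map_nsmul, nsmul_eq_mul]
  have hunit : IsUnit u0 := by
    obtain ⟨z, hz⟩ := castHom_surjective hcj (1 : ZMod c)
    obtain ⟨x, hx⟩ := hsnd z
    have h := keyB (x, z) hx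
    rw [show castc z = 1 from hz] at h
    exact IsUnit.of_mul_eq_one (a := u0) (x.val : ZMod c) (by rw [mul_comm, ← h])
  set U := hunit.unit with hU
  have hUval : (U : ZMod c) = u0 := hunit.unit_spec
  have hci : c ∣ i := by
    have hp : (i : ℕ) • ((1 : ZMod i), y₁) ∈ K := AddSubgroup.nsmul_mem K hy₁ i
    have h := keyB _ hp
    have h1 : ((i : ℕ) • ((1 : ZMod i), y₁)).1 = 0 := by
      rw [Prod.smul_fst, nsmul_eq_mul, mul_one, ZMod.natCast_self]
    rw [h1] at h
    rw [Prod.smul_snd, map_nsmul, nsmul_eq_mul] at h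
    rw [ZMod.val_zero, Nat.cast_zero, zero_mul] at h
    have h2 : (i : ZMod c) = 0 := by
      have h3 := congrArg (· * (↑U⁻¹ : ZMod c)) h
      simpa [mul_assoc, ← hu0, ← hUval, Units.mul_inv, zero_mul] using h3
    exact (ZMod.natCast_eq_zero_iff i c).mp h2
  refine ⟨c, hci, hcj, U, hcpos, ?_⟩
  ext p
  rw [mem_Kcu]
  constructor
  · intro hp
    rw [castHom_val hci, hUval, keyB p hp]
    exact mul_comm _ _
  · intro hp
    obtain ⟨y, hy⟩ := hfst p.1
    have hcy : castc y = castc p.2 := by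
      have h := keyB (p.1, y) hy
      rw [castHom_val hci, hUval] at hp
      rw [h, ← hp, mul_comm]
    have hdiff : ((0 : ZMod i), p.2 - y) ∈ K := (hzero _).mpr (by
      rw [map_sub, hcy, sub_self])
    have hpe : p = (p.1, y) + ((0 : ZMod i), p.2 - y) := Prod.ext (by simp) (by simp)
    rw [hpe]
    exact add_mem hy hdiff


lemma Kcu_card (i j : ℕ) [NeZero i] [NeZero j] :
    Nat.card {K : AddSubgroup (ZMod i × ZMod j) //
        K.map (AddMonoidHom.fst (ZMod i) (ZMod j)) = ⊤ ∧
        K.map (AddMonoidHom.snd (ZMod i) (ZMod j)) = ⊤} = Nat.gcd i j := by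
  have hg0 : Nat.gcd i j ≠ 0 := Nat.gcd_ne_zero_left (NeZero.ne i)
  have hdvdi : ∀ c : {x // x ∈ (Nat.gcd i j).divisors}, (c : ℕ) ∣ i :=
    fun c => dvd_trans (Nat.mem_divisors.mp c.2).1 (Nat.gcd_dvd_left i j)
  have hdvdj : ∀ c : {x // x ∈ (Nat.gcd i j).divisors}, (c : ℕ) ∣ j :=
    fun c => dvd_trans (Nat.mem_divisors.mp c.2).1 (Nat.gcd_dvd_right i j)
  have hnz : ∀ c : {x // x ∈ (Nat.gcd i j).divisors}, NeZero (c : ℕ) :=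
    fun c => ⟨fun h0 => hg0 (by simpa [h0, zero_dvd_iff] using (Nat.mem_divisors.mp c.2).1)⟩
  let Φ : (Σ c : {x // x ∈ (Nat.gcd i j).divisors}, (ZMod (c : ℕ))ˣ) →
      {K : AddSubgroup (ZMod i × ZMod j) //
        K.map (AddMonoidHom.fst (ZMod i) (ZMod j)) = ⊤ ∧
        K.map (AddMonoidHom.snd (ZMod i) (ZMod j)) = ⊤} :=
    fun x => ⟨Kcu i j x.1 (hdvdi x.1) (hdvdj x.1) (x.2 : ZMod (x.1 : ℕ)), by
      haveI := hnz x.1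
      exact ⟨Kcu_map_fst _ _ _, Kcu_map_snd _ _ _⟩⟩
  have hbij : Function.Bijective Φ := by
    constructor
    · rintro ⟨⟨c, hc⟩, u⟩ ⟨⟨c', hc'⟩, u'⟩ h
      haveI := hnz ⟨c, hc⟩
      haveI := hnz ⟨c', hc'⟩
      have hKeq : Kcu i j c (hdvdi ⟨c, hc⟩) (hdvdj ⟨c, hc⟩) (u : ZMod c)
          = Kcu i j c' (hdvdi ⟨c', hc'⟩) (hdvdj ⟨c', hc'⟩) (u' : ZMod c') :=
        congrArg Subtype.val h
      have hmm : ∀ y : ZMod j, (c ∣ y.val ↔ c' ∣ y.val) := by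
        intro y
        have e1 : (((0 : ZMod i), y) ∈ Kcu i j c (hdvdi ⟨c, hc⟩) (hdvdj ⟨c, hc⟩) (u : ZMod c))
            ↔ c ∣ y.val := by
          rw [mem_Kcu, map_zero, mul_zero, eq_comm, castHom_val (hdvdj ⟨c, hc⟩),
            ZMod.natCast_eq_zero_iff]
        have e2 : (((0 : ZMod i), y) ∈ Kcu i j c' (hdvdi ⟨c', hc'⟩) (hdvdj ⟨c', hc'⟩) (u' : ZMod c'))
            ↔ c' ∣ y.val := by
          rw [mem_Kcu, map_zero, mul_zero, eq_comm, castHom_val (hdvdj ⟨c', hc'⟩),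
            ZMod.natCast_eq_zero_iff]
        rw [← e1, ← e2, hKeq]
      have hcc : c = c' := by
        have d1 : c' ∣ c := by
          have := (hmm ((c : ℕ) : ZMod j)).mp (by
            rw [ZMod.val_natCast]
            exact (Nat.dvd_mod_iff (hdvdj ⟨c, hc⟩)).mpr dvd_rfl)
          rw [ZMod.val_natCast] at this
          exact (Nat.dvd_mod_iff (hdvdj ⟨c', hc'⟩)).mp this
        have d2 : c ∣ c' := by
          have := (hmm ((c' : ℕ) : ZMod j)).mpr (by
            rw [ZMod.val_natCast]
            exact (Nat.dvd_mod_iff (hdvdj ⟨c', hc'⟩)).mpr dvd_rfl)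
          rw [ZMod.val_natCast] at this
          exact (Nat.dvd_mod_iff (hdvdj ⟨c, hc⟩)).mp this
        exact Nat.dvd_antisymm d2 d1
      subst hcc
      obtain ⟨x, hx⟩ := castHom_surjective (c := c) (hdvdi ⟨c, hc⟩) (1 : ZMod c)
      obtain ⟨y, hy⟩ := castHom_surjective (c := c) (hdvdj ⟨c, hc⟩) (u : ZMod c)
      have hmem : ((x, y) : ZMod i × ZMod j) ∈ Kcu i j c (hdvdi ⟨c, hc⟩) (hdvdj ⟨c, hc⟩)
          (u : ZMod c) := by
        rw [mem_Kcu]; rw [hx, hy, mul_one]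
      rw [hKeq, mem_Kcu] at hmem
      rw [hx, hy, mul_one] at hmem
      have : u' = u := Units.ext hmem
      subst this
      rfl
    · rintro ⟨K, hK1, hK2⟩
      obtain ⟨c, hci, hcj, u, hcpos, hKeq⟩ := full_proj_eq_Kcu K hK1 hK2
      have hcmem : c ∈ (Nat.gcd i j).divisors :=
        Nat.mem_divisors.mpr ⟨Nat.dvd_gcd hci hcj, hg0⟩
      exact ⟨⟨⟨c, hcmem⟩, u⟩, Subtype.ext hKeq.symm⟩
  rw [← Nat.card_congr (Equiv.ofBijective Φ hbij)]
  haveI : ∀ c : {x // x ∈ (Nat.gcd i j).divisors}, Fintype (ZMod (c : ℕ))ˣ :=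
    fun c => by haveI := hnz c; infer_instance
  rw [Nat.card_eq_fintype_card, Fintype.card_sigma]
  have : ∀ c : {x // x ∈ (Nat.gcd i j).divisors},
      Fintype.card (ZMod (c : ℕ))ˣ = Nat.totient (c : ℕ) := by
    intro c; haveI := hnz c; exact ZMod.card_units_eq_totient _
  rw [Finset.sum_congr rfl (fun c _ => this c)]
  rw [Finset.sum_coe_sort ((Nat.gcd i j).divisors) Nat.totient]
  exact Nat.sum_totient _

lemma fiber_card {m n i j : ℕ} [NeZero m] [NeZero n] (hi : i ∣ m) (hj : j ∣ n) :
    Nat.card {H : AddSubgroup (ZMod m × ZMod n) //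
        Nat.card (H.map (AddMonoidHom.fst (ZMod m) (ZMod n))) = i ∧
        Nat.card (H.map (AddMonoidHom.snd (ZMod m) (ZMod n))) = j} = Nat.gcd i j := by
  haveI : NeZero i := neZero_of_dvd hi
  haveI : NeZero j := neZero_of_dvd hj
  set E := (eps m i hi).prodMap (eps n j hj) with hE
  have hEinj : Function.Injective E := by
    have : ⇑E = Prod.map (eps m i hi) (eps n j hj) := by
      funext p; rfl
    rw [this]
    exact Prod.map_injective.mpr ⟨eps_injective hi, eps_injective hj⟩
  have hcomm1 : ∀ K : AddSubgroup (ZMod i × ZMod j),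
      (K.map E).map (AddMonoidHom.fst (ZMod m) (ZMod n))
        = (K.map (AddMonoidHom.fst (ZMod i) (ZMod j))).map (eps m i hi) := by
    intro K
    rw [AddSubgroup.map_map, AddSubgroup.map_map]
    congr 1
  have hcomm2 : ∀ K : AddSubgroup (ZMod i × ZMod j),
      (K.map E).map (AddMonoidHom.snd (ZMod m) (ZMod n))
        = (K.map (AddMonoidHom.snd (ZMod i) (ZMod j))).map (eps n j hj) := by
    intro K
    rw [AddSubgroup.map_map, AddSubgroup.map_map]
    congr 1
  have hcard1 : ∀ P : AddSubgroup (ZMod i), Nat.card (P.map (eps m i hi)) = Nat.card P :=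
    fun P => (Nat.card_congr (AddSubgroup.equivMapOfInjective P _ (eps_injective hi)).toEquiv).symm
  have hcard2 : ∀ P : AddSubgroup (ZMod j), Nat.card (P.map (eps n j hj)) = Nat.card P :=
    fun P => (Nat.card_congr (AddSubgroup.equivMapOfInjective P _ (eps_injective hj)).toEquiv).symm
  let Ψ : {K : AddSubgroup (ZMod i × ZMod j) //
        K.map (AddMonoidHom.fst (ZMod i) (ZMod j)) = ⊤ ∧
        K.map (AddMonoidHom.snd (ZMod i) (ZMod j)) = ⊤} →
      {H : AddSubgroup (ZMod m × ZMod n) //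
        Nat.card (H.map (AddMonoidHom.fst (ZMod m) (ZMod n))) = i ∧
        Nat.card (H.map (AddMonoidHom.snd (ZMod m) (ZMod n))) = j} :=
    fun K => ⟨K.1.map E, by
      constructor
      · rw [hcomm1, K.2.1, hcard1, AddSubgroup.card_top, Nat.card_zmod]
      · rw [hcomm2, K.2.2, hcard2, AddSubgroup.card_top, Nat.card_zmod]⟩
  have hbij : Function.Bijective Ψ := by
    constructor
    · rintro ⟨K, hK⟩ ⟨K', hK'⟩ h
      exact Subtype.ext (AddSubgroup.map_injective hEinj (congrArg Subtype.val h))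
    · rintro ⟨H, hH1, hH2⟩
      have hP : H.map (AddMonoidHom.fst (ZMod m) (ZMod n)) = (eps m i hi).range :=
        subgroup_eq_range _ hi hH1
      have hQ : H.map (AddMonoidHom.snd (ZMod m) (ZMod n)) = (eps n j hj).range :=
        subgroup_eq_range _ hj hH2
      have hle : H ≤ E.range := by
        rintro ⟨x, y⟩ hp
        have hx : x ∈ (eps m i hi).range := by
          rw [← hP]; exact AddSubgroup.mem_map.mpr ⟨(x, y), hp, rfl⟩
        have hy : y ∈ (eps n j hj).range := by
          rw [← hQ]; exact AddSubgroup.mem_map.mpr ⟨(x, y), hp, rfl⟩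
        obtain ⟨s, hs⟩ := hx
        obtain ⟨t, ht⟩ := hy
        exact ⟨(s, t), by rw [show E (s, t) = (eps m i hi s, eps n j hj t) from rfl, hs, ht]⟩
      have hmc : (H.comap E).map E = H := by
        rw [AddSubgroup.map_comap_eq, inf_eq_right.mpr hle]
      have hfull1 : (H.comap E).map (AddMonoidHom.fst (ZMod i) (ZMod j)) = ⊤ := by
        apply AddSubgroup.map_injective (eps_injective hi)
        rw [← hcomm1, hmc, hP, AddMonoidHom.range_eq_map]
      have hfull2 : (H.comap E).map (AddMonoidHom.snd (ZMod i) (ZMod j)) = ⊤ := by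
        apply AddSubgroup.map_injective (eps_injective hj)
        rw [← hcomm2, hmc, hQ, AddMonoidHom.range_eq_map]
      exact ⟨⟨H.comap E, hfull1, hfull2⟩, Subtype.ext hmc⟩
  rw [← Nat.card_congr (Equiv.ofBijective Ψ hbij), Kcu_card]

lemma exponent_eq {m n : ℕ} [NeZero m] [NeZero n] (H : AddSubgroup (ZMod m × ZMod n)) :
    AddMonoid.exponent H =
      Nat.lcm (Nat.card (H.map (AddMonoidHom.fst (ZMod m) (ZMod n))))
        (Nat.card (H.map (AddMonoidHom.snd (ZMod m) (ZMod n)))) := by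
  set P := H.map (AddMonoidHom.fst (ZMod m) (ZMod n)) with hP
  set Q := H.map (AddMonoidHom.snd (ZMod m) (ZMod n)) with hQ
  set i := Nat.card P with hi
  set j := Nat.card Q with hj
  apply Nat.dvd_antisymm
  · apply AddMonoid.exponent_dvd_of_forall_nsmul_eq_zero
    rintro ⟨⟨x, y⟩, hg⟩
    have hx : i • x = 0 := by
      have hmem : x ∈ P := AddSubgroup.mem_map.mpr ⟨(x, y), hg, rfl⟩
      have := card_nsmul_eq_zero' (G := P) (x := ⟨x, hmem⟩)
      exact congrArg Subtype.val this
    have hy : j • y = 0 := by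
      have hmem : y ∈ Q := AddSubgroup.mem_map.mpr ⟨(x, y), hg, rfl⟩
      have := card_nsmul_eq_zero' (G := Q) (x := ⟨y, hmem⟩)
      exact congrArg Subtype.val this
    have hx' : (Nat.lcm i j) • x = 0 := by
      rw [← Nat.div_mul_cancel (Nat.dvd_lcm_left i j), mul_smul, hx, smul_zero]
    have hy' : (Nat.lcm i j) • y = 0 := by
      rw [← Nat.div_mul_cancel (Nat.dvd_lcm_right i j), mul_smul, hy, smul_zero]
    apply Subtype.ext
    show (Nat.lcm i j) • ((x, y) : ZMod m × ZMod n) = 0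
    refine Prod.ext ?_ ?_
    · rw [Prod.smul_fst]; exact hx'
    · rw [Prod.smul_snd]; exact hy'
  · apply Nat.lcm_dvd
    · have h1 : AddMonoid.exponent P = i := IsAddCyclic.exponent_eq_card
      rw [← h1]
      exact AddMonoidHom.exponent_dvd
        (AddMonoidHom.addSubgroupMap_surjective (AddMonoidHom.fst (ZMod m) (ZMod n)) H)
    · have h1 : AddMonoid.exponent Q = j := IsAddCyclic.exponent_eq_card
      rw [← h1]
      exact AddMonoidHom.exponent_dvd
        (AddMonoidHom.addSubgroupMap_surjective (AddMonoidHom.snd (ZMod m) (ZMod n)) H)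


end Stmt11

open Stmt11 in
theorem stmt_11 (m n E : ℕ) (hm : 1 ≤ m) (hn : 1 ≤ n) (hE : E ∣ Nat.lcm m n) :
    Nat.card {H : AddSubgroup (ZMod m × ZMod n) // AddMonoid.exponent H = E} =
      ∑ i ∈ m.divisors, ∑ j ∈ n.divisors,
        if Nat.lcm i j = E then Nat.gcd i j else 0 := by
  haveI : NeZero m := ⟨by omega⟩
  haveI : NeZero n := ⟨by omega⟩
  classical
  haveI : Finite (AddSubgroup (ZMod m × ZMod n)) :=
    Finite.of_injective (fun H => (H : Set (ZMod m × ZMod n))) SetLike.coe_injective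
  haveI : Fintype (AddSubgroup (ZMod m × ZMod n)) := Fintype.ofFinite _
  set f : AddSubgroup (ZMod m × ZMod n) → ℕ × ℕ :=
    fun H => (Nat.card (H.map (AddMonoidHom.fst (ZMod m) (ZMod n))),
      Nat.card (H.map (AddMonoidHom.snd (ZMod m) (ZMod n)))) with hf
  have hmem : ∀ H ∈ Finset.univ.filter (fun H : AddSubgroup (ZMod m × ZMod n) => AddMonoid.exponent H = E),
      f H ∈ m.divisors ×ˢ n.divisors := by
    intro H _
    rw [Finset.mem_product, Nat.mem_divisors, Nat.mem_divisors]
    refine ⟨⟨?_, NeZero.ne m⟩, ?_, NeZero.ne n⟩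
    · have := AddSubgroup.card_addSubgroup_dvd_card (H.map (AddMonoidHom.fst (ZMod m) (ZMod n)))
      rwa [Nat.card_zmod] at this
    · have := AddSubgroup.card_addSubgroup_dvd_card (H.map (AddMonoidHom.snd (ZMod m) (ZMod n)))
      rwa [Nat.card_zmod] at this
  rw [Nat.card_eq_fintype_card, Fintype.card_subtype]
  rw [Finset.card_eq_sum_card_fiberwise hmem, Finset.sum_product]
  refine Finset.sum_congr rfl (fun i hi => Finset.sum_congr rfl (fun j hj => ?_))
  rw [Finset.filter_filter]
  by_cases hlcm : Nat.lcm i j = E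
  · rw [if_pos hlcm]
    have hcond : ∀ H : AddSubgroup (ZMod m × ZMod n),
        (AddMonoid.exponent H = E ∧ f H = (i, j)) ↔ f H = (i, j) := by
      intro H
      constructor
      · exact fun h => h.2
      · intro h
        refine ⟨?_, h⟩
        rw [exponent_eq H]
        have h1 := congrArg Prod.fst h
        have h2 := congrArg Prod.snd h
        simp only [hf] at h1 h2
        rw [h1, h2, hlcm]
    rw [Finset.filter_congr (fun H _ => hcond H)]
    have : (Finset.univ.filter (fun H => f H = (i, j))).card
        = Nat.card {H : AddSubgroup (ZMod m × ZMod n) //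
            Nat.card (H.map (AddMonoidHom.fst (ZMod m) (ZMod n))) = i ∧
            Nat.card (H.map (AddMonoidHom.snd (ZMod m) (ZMod n))) = j} := by
      rw [Nat.card_eq_fintype_card, Fintype.card_subtype]
      congr 1
      apply Finset.filter_congr
      intro H _
      rw [hf, Prod.mk.injEq]
    rw [this, fiber_card (Nat.mem_divisors.mp hi).1 (Nat.mem_divisors.mp hj).1]
  · rw [if_neg hlcm]
    rw [Finset.card_eq_zero]
    rw [Finset.filter_eq_empty_iff]
    intro H _
    rintro ⟨hexp, hfij⟩
    apply hlcm
    rw [← hexp, exponent_eq H]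
    have h1 := congrArg Prod.fst hfij
    have h2 := congrArg Prod.snd hfij
    simp only [hf] at h1 h2
    rw [h1, h2]
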